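/- Let X, Y, Z be n-dimensional compact polyhedra in (ℝ_{≥0})^n with X = Y ∪ Z, O ∈ Y, O ∉ Z, and suppose that for every nonempty I ⊆ {1,…,n} the intersection Y^I ∩ Z^I has dimension strictly less than |I|. Then ν(X) = ν(Y) + ν(Z). -/

import Mathlib

open MeasureTheory

/-- The nonnegative orthant in `ℝ^n`. -/
def orthant (n : ℕ) : Set (Fin n → ℝ) := {x | ∀ i, 0 ≤ x i}

/-- The coordinate subspace `ℝ^I = {x : x_i = 0 for i ∉ I}`. -/
def coordSub {n : ℕ} (I : Finset (Fin n)) : Set (Fin n → ℝ) := {x | ∀ i ∉ I, x i = 0}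

/-- The projection `π_I` setting the coordinates indexed by `I` to zero. -/
def coordProj {n : ℕ} (I : Finset (Fin n)) (x : Fin n → ℝ) : Fin n → ℝ :=
  fun i => if i ∈ I then 0 else x i

/-- `|I|`-dimensional Lebesgue volume of `X ∩ ℝ^I` computed inside `ℝ^I`. -/
noncomputable def coordVol {n : ℕ} (I : Finset (Fin n)) (X : Set (Fin n → ℝ)) : ℝ :=
  (volume ((fun (y : I → ℝ) => (fun i => if h : i ∈ I then y ⟨i, h⟩ else 0 : Fin n → ℝ)) ⁻¹' X)).toReal

/-- The Newton number of `X` computed relative to the coordinate set `K`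
(for the ambient space `ℝ^K`); taking `K = univ` gives the usual Newton number. -/
noncomputable def newtonNumberOn {n : ℕ} (K : Finset (Fin n)) (X : Set (Fin n → ℝ)) : ℝ :=
  ∑ I ∈ K.powerset, (-1 : ℝ) ^ (K.card - I.card) * (Nat.factorial I.card : ℝ) * coordVol I X

/-- `ℝ^I` is a full-supporting coordinate subspace for the simplex with vertices `P`:
it contains exactly `|I| + 1` of the vertices. -/
def FullSupp {n : ℕ} (P : Fin (n+1) → (Fin n → ℝ)) (I : Finset (Fin n)) : Prop :=
  Nat.card {j : Fin (n+1) // P j ∈ coordSub I} = I.card + 1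

/-- A compact polyhedron: finite union of compact convex polytopes. -/
def IsCompactPolyhedron {n : ℕ} (X : Set (Fin n → ℝ)) : Prop :=
  ∃ (k : ℕ) (F : Fin k → Finset (Fin n → ℝ)),
    X = ⋃ i, convexHull ℝ (↑(F i) : Set (Fin n → ℝ))

/-- A pure `n`-dimensional compact polyhedron in `ℝ^n`: finite union of `n`-dimensional
compact convex polytopes. -/
def IsPureCompactPolyhedron {n : ℕ} (X : Set (Fin n → ℝ)) : Prop :=
  ∃ (k : ℕ) (F : Fin k → Finset (Fin n → ℝ)),
    X = (⋃ i, convexHull ℝ (↑(F i) : Set (Fin n → ℝ))) ∧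
    ∀ i, affineSpan ℝ (↑(F i) : Set (Fin n → ℝ)) = ⊤

/-- A quasi-convenient polyhedron in the nonnegative orthant. -/
def QuasiConvenient {n : ℕ} (X : Set (Fin n → ℝ)) : Prop :=
  IsCompactPolyhedron X ∧ X ⊆ orthant n ∧ (0 : Fin n → ℝ) ∈ X ∧
  (∀ P ∈ Set.extremePoints ℝ X, ∀ i, P i ≠ 0 → 1 ≤ P i) ∧
  ∀ I : Finset (Fin n),
    Nonempty ((X ∩ coordSub I : Set (Fin n → ℝ)) ≃ₜ
      (Metric.closedBall (0 : EuclideanSpace ℝ (Fin I.card)) 1))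

/-- `F^l_k(d_1,…,d_k) = Σ_{i_1+⋯+i_k=l-k} d_1^{i_1+1}⋯d_k^{i_k+1}`, where `d j`
denotes `d_j` for `1 ≤ j ≤ k`. -/
def Fpoly (k l : ℕ) (d : ℕ → ℕ) : ℕ :=
  ∑ c ∈ Finset.Nat.antidiagonalTuple k (l - k), ∏ j : Fin k, d (j.val + 1) ^ (c j + 1)

/-- `G^l_k(d_1,…,d_k) = Σ_{i_1+⋯+i_k=l-k} d_1^{i_1}⋯d_k^{i_k}`. -/
def Gpoly (k l : ℕ) (d : ℕ → ℕ) : ℕ :=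
  ∑ c ∈ Finset.Nat.antidiagonalTuple k (l - k), ∏ j : Fin k, d (j.val + 1) ^ (c j)

open Classical in
/-- The `r`-th Newton number of `(d_1,…,d_r)`-type, relative to the coordinate set `K`. -/
noncomputable def rNewtonOn {n : ℕ} (K : Finset (Fin n)) (r : ℕ) (d : ℕ → ℕ)
    (X : Set (Fin n → ℝ)) : ℝ :=
  (∑ I ∈ K.powerset.filter (fun I => r ≤ I.card),
      (-1 : ℝ) ^ (K.card - I.card) * (Fpoly r I.card d : ℝ) *
        (Nat.factorial I.card : ℝ) * coordVol I X)
  + (if (0 : Fin n → ℝ) ∈ X then 1 else 0) * (-1 : ℝ) ^ (K.card - r + 1)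

/-- The embedding `ℝ^I → ℝ^n` as a linear map. -/
def embL {n : ℕ} (I : Finset (Fin n)) : ({ x // x ∈ I } → ℝ) →ₗ[ℝ] (Fin n → ℝ) where
  toFun y := fun i => if h : i ∈ I then y ⟨i, h⟩ else 0
  map_add' y z := by funext i; by_cases h : i ∈ I <;> simp [h]
  map_smul' c y := by funext i; by_cases h : i ∈ I <;> simp [h]

lemma embL_injective {n : ℕ} (I : Finset (Fin n)) : Function.Injective (embL I) := by
  intro y z h
  funext j
  have := congrFun h j
  simpa [embL, dif_pos j.2] using this

lemma embL_mem_coordSub {n : ℕ} (I : Finset (Fin n)) (y : { x // x ∈ I } → ℝ) :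
    embL I y ∈ coordSub I := fun i hi => by simp [embL, dif_neg hi]

lemma coordVol_eq {n : ℕ} (I : Finset (Fin n)) (X : Set (Fin n → ℝ)) :
    coordVol I X = (volume ((embL I) ⁻¹' X)).toReal := rfl

lemma isCompact_of_polyhedron {n : ℕ} {X : Set (Fin n → ℝ)} (h : IsCompactPolyhedron X) :
    IsCompact X := by
  obtain ⟨k, F, rfl⟩ := h
  exact isCompact_iUnion fun i => ((F i).finite_toSet).isCompact_convexHull ℝ

lemma embL_closedEmbedding {n : ℕ} (I : Finset (Fin n)) :
    Topology.IsClosedEmbedding (embL I) :=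
  (embL I).isClosedEmbedding_of_injective
    (LinearMap.ker_eq_bot.mpr (embL_injective I))

lemma isCompact_preimage_embL {n : ℕ} (I : Finset (Fin n)) {X : Set (Fin n → ℝ)}
    (hX : IsCompact X) : IsCompact ((embL I) ⁻¹' X) :=
  (embL_closedEmbedding I).isInducing.isCompact_preimage
    (embL_closedEmbedding I).isClosed_range hX

lemma null_of_lowdim {n : ℕ} (I : Finset (Fin n)) {W : Set (Fin n → ℝ)}
    (h : Module.finrank ℝ (vectorSpan ℝ W) < I.card) :
    volume ((embL I) ⁻¹' W) = 0 := by
  set S : Set ({ x // x ∈ I } → ℝ) := (embL I) ⁻¹' W with hS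
  rcases S.eq_empty_or_nonempty with hSe | hSne
  · simp [hSe]
  -- the vector span of `S` maps into the vector span of `W`
  have hmap : Submodule.map (embL I) (vectorSpan ℝ S) ≤ vectorSpan ℝ W := by
    rw [vectorSpan_def, Submodule.map_span]
    apply Submodule.span_le.mpr
    rintro v ⟨w, ⟨a, ha, b, hb, rfl⟩, rfl⟩
    have : (embL I) (a -ᵥ b) = (embL I a) -ᵥ (embL I b) := by
      simp [vsub_eq_sub, map_sub]
    rw [this]
    exact vsub_mem_vectorSpan ℝ ha hb
  have hrk : Module.finrank ℝ (vectorSpan ℝ S) < I.card := by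
    have h1 : Module.finrank ℝ (vectorSpan ℝ S) =
        Module.finrank ℝ (Submodule.map (embL I) (vectorSpan ℝ S)) :=
      (Submodule.equivMapOfInjective (embL I) (embL_injective I)
        (vectorSpan ℝ S)).finrank_eq
    have h2 : Module.finrank ℝ (Submodule.map (embL I) (vectorSpan ℝ S)) ≤
        Module.finrank ℝ (vectorSpan ℝ W) := Submodule.finrank_mono hmap
    omega
  have htop : affineSpan ℝ S ≠ ⊤ := by
    intro htop
    have : vectorSpan ℝ S = ⊤ := by
      rw [← direction_affineSpan, htop, AffineSubspace.direction_top]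
    rw [this] at hrk
    have := finrank_top ℝ ({ x // x ∈ I } → ℝ)
    rw [this, Module.finrank_fintype_fun_eq_card, Fintype.card_coe] at hrk
    omega
  refine le_antisymm ?_ zero_le
  calc volume S ≤ volume ((affineSpan ℝ S : AffineSubspace ℝ _) : Set _) :=
        measure_mono (subset_affineSpan ℝ S)
    _ = 0 := Measure.addHaar_affineSubspace volume _ htop

lemma coordVol_union {n : ℕ} (I : Finset (Fin n)) {Y Z : Set (Fin n → ℝ)}
    (hYc : IsCompact Y) (hZc : IsCompact Z)
    (hnull : volume ((embL I) ⁻¹' (Y ∩ Z)) = 0) :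
    coordVol I (Y ∪ Z) = coordVol I Y + coordVol I Z := by
  rw [coordVol_eq, coordVol_eq, coordVol_eq, Set.preimage_union]
  have hZm : MeasurableSet ((embL I) ⁻¹' Z) :=
    (hZc.isClosed.preimage (embL I).continuous_of_finiteDimensional).measurableSet
  have key := measure_union_add_inter (μ := volume) ((embL I) ⁻¹' Y) hZm
  rw [← Set.preimage_inter, hnull, add_zero] at key
  rw [key]
  exact ENNReal.toReal_add
    ((isCompact_preimage_embL I hYc).measure_lt_top).ne
    ((isCompact_preimage_embL I hZc).measure_lt_top).ne

lemma coordVol_add_main {n : ℕ} (I : Finset (Fin n)) {Y Z : Set (Fin n → ℝ)}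
    (hYc : IsCompact Y) (hZc : IsCompact Z)
    (hOY : (0 : Fin n → ℝ) ∈ Y) (hOZ : (0 : Fin n → ℝ) ∉ Z)
    (hdim : I.Nonempty →
      (Y ∩ coordSub I) ∩ (Z ∩ coordSub I) = ∅ ∨
      Module.finrank ℝ (vectorSpan ℝ ((Y ∩ coordSub I) ∩ (Z ∩ coordSub I))) < I.card) :
    coordVol I (Y ∪ Z) = coordVol I Y + coordVol I Z := by
  apply coordVol_union I hYc hZc
  have hpre : (embL I) ⁻¹' (Y ∩ Z) =
      (embL I) ⁻¹' ((Y ∩ coordSub I) ∩ (Z ∩ coordSub I)) := by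
    ext y
    simp only [Set.mem_preimage, Set.mem_inter_iff]
    have := embL_mem_coordSub I y
    tauto
  rw [hpre]
  rcases I.eq_empty_or_nonempty with rfl | hIne
  · have : ∀ y : { x // x ∈ (∅ : Finset (Fin n)) } → ℝ, embL ∅ y = 0 := by
      intro y; funext i; simp [embL]
    have hempty : (embL (∅ : Finset (Fin n))) ⁻¹'
        ((Y ∩ coordSub ∅) ∩ (Z ∩ coordSub ∅)) = ∅ := by
      ext y
      simp only [Set.mem_preimage, Set.mem_inter_iff, this y, Set.mem_empty_iff_false,
        iff_false]
      tauto
    simp [hempty]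
  rcases hdim hIne with he | hlt
  · simp [he]
  · exact null_of_lowdim I hlt

theorem stmt6 (n : ℕ) (X Y Z : Set (Fin n → ℝ))
    (hXp : IsCompactPolyhedron X) (hYp : IsCompactPolyhedron Y) (hZp : IsCompactPolyhedron Z)
    (hXo : X ⊆ orthant n) (hYo : Y ⊆ orthant n) (hZo : Z ⊆ orthant n)
    (hXd : Module.finrank ℝ (vectorSpan ℝ X) = n)
    (hYd : Module.finrank ℝ (vectorSpan ℝ Y) = n)
    (hZd : Module.finrank ℝ (vectorSpan ℝ Z) = n)
    (hXYZ : X = Y ∪ Z) (hOY : (0 : Fin n → ℝ) ∈ Y) (hOZ : (0 : Fin n → ℝ) ∉ Z)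
    (hdim : ∀ I : Finset (Fin n), I.Nonempty →
      (Y ∩ coordSub I) ∩ (Z ∩ coordSub I) = ∅ ∨
      Module.finrank ℝ (vectorSpan ℝ ((Y ∩ coordSub I) ∩ (Z ∩ coordSub I))) < I.card) :
    newtonNumberOn Finset.univ X =
      newtonNumberOn Finset.univ Y + newtonNumberOn Finset.univ Z := by
  have hYc := isCompact_of_polyhedron hYp
  have hZc := isCompact_of_polyhedron hZp
  unfold newtonNumberOn
  rw [← Finset.sum_add_distrib]
  apply Finset.sum_congr rfl
  intro I _
  rw [hXYZ, coordVol_add_main I hYc hZc hOY hOZ (hdim I)]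
  ring
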